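/- arXiv:math/0402366 — 3 statements merged into one kernel-verified Lean document; each statement's English description precedes it below -/
import Mathlib

section
/- Let g be a hyper-Kähler metric on a hypercomplex manifold (M,I,J,K) and let ν be a Kähler potential for the complex structure I, that is F_I = dd_Iν. Then F_J = ½(dd_J + d_K d_I)ν and F_K = ½(dd_K + d_I d_J)ν; in particular ν is an HKT potential for g. -/
noncomputable section

open Function

namespace HKTPaper

variable {E : Type*} [NormedAddCommGroup E] [NormedSpace ℝ E] [FiniteDimensional ℝ E]

/-- Exterior derivative of a function, in flat coordinates. -/
def d0 (f : E → ℝ) : E → E → ℝ := fun x u => fderiv ℝ f x u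

/-- Exterior derivative of a 1-form (evaluated on constant vector fields), flat coordinates. -/
def d1 (θ : E → E → ℝ) : E → E → E → ℝ := fun x u v =>
  fderiv ℝ (fun y => θ y v) x u - fderiv ℝ (fun y => θ y u) x v

/-- Exterior derivative of a 2-form, flat coordinates. -/
def d2 (F : E → E → E → ℝ) : E → E → E → E → ℝ := fun x u v w =>
  fderiv ℝ (fun y => F y v w) x u - fderiv ℝ (fun y => F y u w) x v
    + fderiv ℝ (fun y => F y u v) x w

variable {P : Type*}

/-- Action of an almost complex structure on 1-forms: `(𝓘θ)(X) = -θ(𝓘X)`. -/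
def act1 (I : P → E →L[ℝ] E) (θ : P → E → ℝ) : P → E → ℝ := fun x u => -θ x (I x u)

/-- Action of an almost complex structure on 2-forms: `(𝓘ω)(X,Y) = ω(𝓘X,𝓘Y)`. -/
def act2 (I : P → E →L[ℝ] E) (F : P → E → E → ℝ) : P → E → E → ℝ := fun x u v =>
  F x (I x u) (I x v)

/-- Action of an almost complex structure on 3-forms: `(𝓘ω)(X,Y,Z) = -ω(𝓘X,𝓘Y,𝓘Z)`. -/
def act3 (I : P → E →L[ℝ] E) (G : P → E → E → E → ℝ) : P → E → E → E → ℝ := fun x u v w =>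
  -G x (I x u) (I x v) (I x w)

/-- `d_𝓘` on functions: `d_𝓘 f = 𝓘 d (𝓘 f)`. -/
def dc0 (I : E → E →L[ℝ] E) (f : E → ℝ) : E → E → ℝ := act1 I (d0 f)

/-- `d_𝓘` on 1-forms: `d_𝓘 θ = (-1)¹ 𝓘 d (𝓘 θ)`. -/
def dc1 (I : E → E →L[ℝ] E) (θ : E → E → ℝ) : E → E → E → ℝ := fun x u v =>
  -(act2 I (d1 (act1 I θ)) x u v)

/-- Lie bracket of vector fields, flat coordinates. -/
def lieBracket (X Y : E → E) : E → E := fun x => fderiv ℝ Y x (X x) - fderiv ℝ X x (Y x)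

/-- Nijenhuis tensor `N(X,Y) = [𝓘X,𝓘Y] - 𝓘[𝓘X,Y] - 𝓘[X,𝓘Y] - [X,Y]` evaluated on the
constant vector fields with values `u`, `v`. -/
def nijTensor (I : E → E →L[ℝ] E) (u v : E) : E → E := fun x =>
  lieBracket (fun y => I y u) (fun y => I y v) x
    - I x (lieBracket (fun y => I y u) (fun _ => v) x)
    - I x (lieBracket (fun _ => u) (fun y => I y v) x)
    - lieBracket (fun _ => u) (fun _ => v) x

/-- An almost complex structure on an open set `U`. -/
structure IsAcsOn (U : Set E) (I : E → E →L[ℝ] E) : Prop where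
  smooth : ContDiffOn ℝ (⊤ : ℕ∞) I U
  square : ∀ x ∈ U, ∀ v, I x (I x v) = -v

/-- Integrability (vanishing of the Nijenhuis tensor). -/
def IntegrableOn (U : Set E) (I : E → E →L[ℝ] E) : Prop :=
  ∀ u v : E, ∀ x ∈ U, nijTensor I u v x = 0

/-- A hypercomplex structure on an open set `U`: three integrable almost complex structures
with `IJ = -JI = K`. -/
structure IsHypercomplexOn (U : Set E) (I J K : E → E →L[ℝ] E) : Prop where
  acsI : IsAcsOn U I
  acsJ : IsAcsOn U J
  acsK : IsAcsOn U K
  mulIJ : ∀ x ∈ U, ∀ v, I x (J x v) = K x v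
  mulJI : ∀ x ∈ U, ∀ v, J x (I x v) = -(K x v)
  intI : IntegrableOn U I
  intJ : IntegrableOn U J
  intK : IntegrableOn U K

/-- A hyperhermitian (possibly indefinite) metric on `U`. -/
structure IsHyperHermitianOn (U : Set E) (I J K : E → E →L[ℝ] E)
    (g : E → E →ₗ[ℝ] E →ₗ[ℝ] ℝ) : Prop where
  smooth : ∀ u v : E, ContDiffOn ℝ (⊤ : ℕ∞) (fun x => g x u v) U
  symm : ∀ x ∈ U, ∀ u v, g x u v = g x v u
  nondeg : ∀ x ∈ U, ∀ u, (∀ v, g x u v = 0) → u = 0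
  hermI : ∀ x ∈ U, ∀ u v, g x (I x u) (I x v) = g x u v
  hermJ : ∀ x ∈ U, ∀ u v, g x (J x u) (J x v) = g x u v
  hermK : ∀ x ∈ U, ∀ u v, g x (K x u) (K x v) = g x u v

/-- The Kähler form `F_𝓘 = g(𝓘·,·)`. -/
def kaehlerForm (I : E → E →L[ℝ] E) (g : E → E →ₗ[ℝ] E →ₗ[ℝ] ℝ) : E → E → E → ℝ :=
  fun x u v => g x (I x u) v

/-- The HKT condition `I dF_I = J dF_J = K dF_K` on `U`. -/
def IsHKTOn (U : Set E) (I J K : E → E →L[ℝ] E) (g : E → E →ₗ[ℝ] E →ₗ[ℝ] ℝ) : Prop :=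
  (∀ x ∈ U, ∀ u v w, act3 I (d2 (kaehlerForm I g)) x u v w
      = act3 J (d2 (kaehlerForm J g)) x u v w) ∧
  (∀ x ∈ U, ∀ u v w, act3 J (d2 (kaehlerForm J g)) x u v w
      = act3 K (d2 (kaehlerForm K g)) x u v w)

/-- `μ` is an HKT potential for `g` on `U`:
`F_I = ½(dd_I + d_J d_K)μ`, `F_J = ½(dd_J + d_K d_I)μ`, `F_K = ½(dd_K + d_I d_J)μ`. -/
def IsHKTPotentialOn (U : Set E) (I J K : E → E →L[ℝ] E)
    (g : E → E →ₗ[ℝ] E →ₗ[ℝ] ℝ) (μ : E → ℝ) : Prop :=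
  ∀ x ∈ U, ∀ u v,
    kaehlerForm I g x u v = (1 / 2) * (d1 (dc0 I μ) x u v + dc1 J (dc0 K μ) x u v) ∧
    kaehlerForm J g x u v = (1 / 2) * (d1 (dc0 J μ) x u v + dc1 K (dc0 I μ) x u v) ∧
    kaehlerForm K g x u v = (1 / 2) * (d1 (dc0 K μ) x u v + dc1 I (dc0 J μ) x u v)

end HKTPaper

namespace HKTPaper

variable {E : Type*} [NormedAddCommGroup E] [NormedSpace ℝ E] [FiniteDimensional ℝ E]

/-- A hyper-Kähler metric: a hyperhermitian metric which is Kähler for each of the three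
complex structures, i.e. `dF_I = dF_J = dF_K = 0`. -/
structure IsHyperKaehlerOn (U : Set E) (I J K : E → E →L[ℝ] E)
    (g : E → E →ₗ[ℝ] E →ₗ[ℝ] ℝ) : Prop where
  hyperHermitian : IsHyperHermitianOn U I J K g
  closedI : ∀ x ∈ U, ∀ u v w, d2 (kaehlerForm I g) x u v w = 0
  closedJ : ∀ x ∈ U, ∀ u v w, d2 (kaehlerForm J g) x u v w = 0
  closedK : ∀ x ∈ U, ∀ u v w, d2 (kaehlerForm K g) x u v w = 0

section AuxHKT

variable {U : Set E} {x : E}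

/-- Derivative of `y ↦ Q y z` for an operator-valued map `Q` and constant `z`. -/
lemma hasFDerivAt_apply_const {Q : E → E →L[ℝ] E} (hQ : DifferentiableAt ℝ Q x) (z : E) :
    HasFDerivAt (fun y => Q y z) ((fderiv ℝ Q x).flip z) x := by
  have h := hQ.hasFDerivAt.clm_apply (hasFDerivAt_const z x)
  simpa only [ContinuousLinearMap.comp_zero, zero_add] using h

/-- Derivative of `y ↦ (fderiv ν y) (Q y z)`. -/
lemma hasFDerivAt_dnu_apply {ν : E → ℝ} {Q : E → E →L[ℝ] E}
    (hν : DifferentiableAt ℝ (fderiv ℝ ν) x) (hQ : DifferentiableAt ℝ Q x) (z : E) :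
    HasFDerivAt (fun y => fderiv ℝ ν y (Q y z))
      ((fderiv ℝ ν x).comp ((fderiv ℝ Q x).flip z)
        + (fderiv ℝ (fderiv ℝ ν) x).flip (Q x z)) x :=
  hν.hasFDerivAt.clm_apply (hasFDerivAt_apply_const hQ z)

/-- Differentiating a pointwise relation `Q y (R y z) = φ y` valid on an open set. -/
lemma comp_struct_deriv (hU : IsOpen U) (hx : x ∈ U)
    {Q R : E → E →L[ℝ] E} (hQ : DifferentiableAt ℝ Q x) (hR : DifferentiableAt ℝ R x)
    {z : E} {φ : E → E} {φ' : E →L[ℝ] E} (hφ : HasFDerivAt φ φ' x)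
    (h : ∀ y ∈ U, Q y (R y z) = φ y) (w : E) :
    Q x (fderiv ℝ R x w z) + fderiv ℝ Q x w (R x z) = φ' w := by
  have h1 : HasFDerivAt (fun y => Q y (R y z))
      ((Q x).comp ((fderiv ℝ R x).flip z) + (fderiv ℝ Q x).flip (R x z)) x :=
    hQ.hasFDerivAt.clm_apply (hasFDerivAt_apply_const hR z)
  have h2 : HasFDerivAt (fun y => Q y (R y z)) φ' x :=
    hφ.congr_of_eventuallyEq (by filter_upwards [hU.mem_nhds hx] with y hy using h y hy)
  have h3 := h1.unique h2
  have h4 := congrArg (fun (L : E →L[ℝ] E) => L w) h3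
  simpa using h4

/-- Expansion of `d1 (dc0 Q ν)` in terms of the Hessian and first-order terms. -/
lemma d1_dc0_eq (hU : IsOpen U) (hx : x ∈ U) {ν : E → ℝ}
    (hν : ContDiffOn ℝ (⊤ : ℕ∞) ν U) {Q : E → E →L[ℝ] E}
    (hQ : DifferentiableAt ℝ Q x) (u v : E) :
    d1 (dc0 Q ν) x u v
      = fderiv ℝ (fderiv ℝ ν) x v (Q x u) + fderiv ℝ ν x (fderiv ℝ Q x v u)
        - fderiv ℝ (fderiv ℝ ν) x u (Q x v) - fderiv ℝ ν x (fderiv ℝ Q x u v) := by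
  have hνx : ContDiffAt ℝ (⊤ : ℕ∞) ν x := hν.contDiffAt (hU.mem_nhds hx)
  have dν2 : DifferentiableAt ℝ (fderiv ℝ ν) x :=
    (hνx.fderiv_right (m := (⊤:ℕ∞)) (by exact_mod_cast le_top)).differentiableAt (by simp)
  have h1 := ((hasFDerivAt_dnu_apply dν2 hQ v).neg).fderiv
  have h2 := ((hasFDerivAt_dnu_apply dν2 hQ u).neg).fderiv
  simp only [d1, dc0, act1, d0]
  rw [show (fun y => -(fderiv ℝ ν y (Q y v))) = (-(fun y' => fderiv ℝ ν y' (Q y' v))) from rfl] 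
  rw [h1]
  rw [show (fun y => -(fderiv ℝ ν y (Q y u))) = (-(fun y' => fderiv ℝ ν y' (Q y' u))) from rfl]
  rw [h2]
  simp only [ContinuousLinearMap.neg_apply, ContinuousLinearMap.add_apply,
    ContinuousLinearMap.comp_apply, ContinuousLinearMap.flip_apply]
  ring

/-- `d_Q` of a 1-form which, near `x`, is `Q`-conjugate to another 1-form `η`. -/
lemma dc1_eq_of_rel {θ η : E → E → ℝ} {Q : E → E →L[ℝ] E}
    (h : ∀ z, (fun y => act1 Q θ y z) =ᶠ[nhds x] (fun y => η y z)) (u v : E) :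
    dc1 Q θ x u v = -(d1 η x (Q x u) (Q x v)) := by
  simp only [dc1, act2, d1]
  rw [(h (Q x v)).fderiv_eq, (h (Q x u)).fderiv_eq]

/-- Certificate lemma A. -/
lemma certA (Ix Jx Kx : E →L[ℝ] E) (A B C : E →L[ℝ] E →L[ℝ] E) (p : E →L[ℝ] ℝ)
    (hII : ∀ w, Ix (Ix w) = -w) (hIJ : ∀ w, Ix (Jx w) = Kx w) (hIK : ∀ w, Ix (Kx w) = -(Jx w))
    (hJI : ∀ w, Jx (Ix w) = -(Kx w)) (hJJ : ∀ w, Jx (Jx w) = -w) (hJK : ∀ w, Jx (Kx w) = Ix w)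
    (hKI : ∀ w, Kx (Ix w) = Jx w) (hKJ : ∀ w, Kx (Jx w) = -(Ix w)) (hKK : ∀ w, Kx (Kx w) = -w)
    (hSA : ∀ w z, Ix (A w z) + A w (Ix z) = 0)
    (hSB : ∀ w z, Jx (B w z) + B w (Jx z) = 0)
    (hP1 : ∀ w z, Ix (B w z) + A w (Jx z) = C w z)
    (hP2 : ∀ w z, Jx (A w z) + B w (Ix z) = -(C w z))
    (hNA : ∀ a b, A (Ix a) b - A (Ix b) a + Ix (A b a) - Ix (A a b) = 0)
    (hNB : ∀ a b, B (Jx a) b - B (Jx b) a + Jx (B b a) - Jx (B a b) = 0)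
    (u v : E) :
    p (B u v) - p (B v u) - p (B (Kx u) (Kx v)) + p (B (Kx v) (Kx u))
      + p (A u (Kx v)) - p (A (Kx v) u) - p (A v (Kx u)) + p (A (Kx u) v) = 0 := by
  have e1 := congrArg p (hSA u (Jx v))
  have e2 := congrArg p (hSA v (Jx u))
  have e3 := congrArg p (hSB (Kx u) (Ix v))
  have e4 := congrArg p (hSB (Kx v) (Ix u))
  have e5 := congrArg (fun t => p (Ix t)) (hP1 u v)
  have e6 := congrArg (fun t => p (Ix t)) (hP2 u v)
  have e7 := congrArg p (hP1 (Ix u) v)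
  have e8 := congrArg p (hP2 (Ix u) v)
  have e9 := congrArg (fun t => p (Kx t)) (hP1 (Jx u) v)
  have e10 := congrArg (fun t => p (Kx t)) (hP2 (Jx u) v)
  have e11 := congrArg (fun t => p (Jx t)) (hP1 (Kx u) v)
  have e12 := congrArg (fun t => p (Jx t)) (hP2 (Kx u) v)
  have e13 := congrArg (fun t => p (Ix t)) (hP1 v u)
  have e14 := congrArg (fun t => p (Ix t)) (hP2 v u)
  have e15 := congrArg p (hP1 (Ix v) u)
  have e16 := congrArg p (hP2 (Ix v) u)
  have e17 := congrArg (fun t => p (Kx t)) (hP1 (Jx v) u)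
  have e18 := congrArg (fun t => p (Kx t)) (hP2 (Jx v) u)
  have e19 := congrArg (fun t => p (Jx t)) (hP1 (Kx v) u)
  have e20 := congrArg (fun t => p (Jx t)) (hP2 (Kx v) u)
  have e21 := congrArg (fun t => p (Jx t)) (hNA u v)
  have e22 := congrArg p (hNA u (Jx v))
  have e23 := congrArg p (hNA (Jx u) v)
  have e24 := congrArg (fun t => p (Jx t)) (hNA (Jx u) (Jx v))
  have e25 := congrArg (fun t => p (Jx t)) (hNB u v)
  have e26 := congrArg (fun t => p (Kx t)) (hNB u (Ix v))
  have e27 := congrArg (fun t => p (Kx t)) (hNB (Ix u) v)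
  have e28 := congrArg (fun t => p (Jx t)) (hNB (Ix u) (Ix v))
  simp only [map_add, map_neg, map_sub, map_zero, neg_neg, ContinuousLinearMap.neg_apply, ContinuousLinearMap.add_apply, ContinuousLinearMap.sub_apply, hII, hIJ, hIK, hJI, hJJ, hJK, hKI, hKJ, hKK] at e1 e2 e3 e4 e5 e6 e7 e8 e9 e10 e11 e12 e13 e14 e15 e16 e17 e18 e19 e20 e21 e22 e23 e24 e25 e26 e27 e28
  linarith [e1, e2, e3, e4, e5, e6, e7, e8, e9, e10, e11, e12, e13, e14, e15, e16, e17, e18, e19, e20, e21, e22, e23, e24, e25, e26, e27, e28]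

/-- Certificate lemma B. -/
lemma certB (Ix Jx Kx : E →L[ℝ] E) (A B C : E →L[ℝ] E →L[ℝ] E) (p : E →L[ℝ] ℝ)
    (hII : ∀ w, Ix (Ix w) = -w) (hIJ : ∀ w, Ix (Jx w) = Kx w) (hIK : ∀ w, Ix (Kx w) = -(Jx w))
    (hJI : ∀ w, Jx (Ix w) = -(Kx w)) (hJJ : ∀ w, Jx (Jx w) = -w) (hJK : ∀ w, Jx (Kx w) = Ix w)
    (hKI : ∀ w, Kx (Ix w) = Jx w) (hKJ : ∀ w, Kx (Jx w) = -(Ix w)) (hKK : ∀ w, Kx (Kx w) = -w)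
    (hSA : ∀ w z, Ix (A w z) + A w (Ix z) = 0)
    (hSB : ∀ w z, Jx (B w z) + B w (Jx z) = 0)
    (hP1 : ∀ w z, Ix (B w z) + A w (Jx z) = C w z)
    (hP2 : ∀ w z, Jx (A w z) + B w (Ix z) = -(C w z))
    (hNA : ∀ a b, A (Ix a) b - A (Ix b) a + Ix (A b a) - Ix (A a b) = 0)
    (hNB : ∀ a b, B (Jx a) b - B (Jx b) a + Jx (B b a) - Jx (B a b) = 0)
    (u v : E) :
    p (A u (Jx v)) - p (A (Jx v) u) - p (A v (Jx u)) + p (A (Jx u) v)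
      - p (C u v) + p (C v u) + p (C (Ix u) (Ix v)) - p (C (Ix v) (Ix u)) = 0 := by
  have e1 := congrArg p (hSA (Ix u) (Jx v))
  have e2 := congrArg p (hSA (Ix v) (Jx u))
  have e3 := congrArg p (hP1 u v)
  have e4 := congrArg p (hP2 u v)
  have e5 := congrArg (fun t => p (Ix t)) (hP1 (Ix u) v)
  have e6 := congrArg (fun t => p (Ix t)) (hP2 (Ix u) v)
  have e7 := congrArg p (hP1 (Ix u) (Ix v))
  have e8 := congrArg (fun t => p (Jx t)) (hP1 (Jx u) v)
  have e9 := congrArg (fun t => p (Jx t)) (hP2 (Jx u) v)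
  have e10 := congrArg (fun t => p (Kx t)) (hP1 (Kx u) v)
  have e11 := congrArg (fun t => p (Kx t)) (hP2 (Kx u) v)
  have e12 := congrArg p (hP1 v u)
  have e13 := congrArg p (hP2 v u)
  have e14 := congrArg (fun t => p (Ix t)) (hP1 (Ix v) u)
  have e15 := congrArg (fun t => p (Ix t)) (hP2 (Ix v) u)
  have e16 := congrArg p (hP1 (Ix v) (Ix u))
  have e17 := congrArg (fun t => p (Jx t)) (hP1 (Jx v) u)
  have e18 := congrArg (fun t => p (Jx t)) (hP2 (Jx v) u)
  have e19 := congrArg (fun t => p (Kx t)) (hP1 (Kx v) u)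
  have e20 := congrArg (fun t => p (Kx t)) (hP2 (Kx v) u)
  have e21 := congrArg (fun t => p (Kx t)) (hNA u v)
  have e22 := congrArg (fun t => p (Ix t)) (hNA u (Jx v))
  have e23 := congrArg (fun t => p (Ix t)) (hNA (Jx u) v)
  have e24 := congrArg (fun t => p (Kx t)) (hNA (Jx u) (Jx v))
  have e25 := congrArg (fun t => p (Kx t)) (hNB u v)
  have e26 := congrArg (fun t => p (Jx t)) (hNB u (Ix v))
  have e27 := congrArg (fun t => p (Jx t)) (hNB (Ix u) v)
  have e28 := congrArg (fun t => p (Kx t)) (hNB (Ix u) (Ix v))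
  simp only [map_add, map_neg, map_sub, map_zero, neg_neg, ContinuousLinearMap.neg_apply, ContinuousLinearMap.add_apply, ContinuousLinearMap.sub_apply, hII, hIJ, hIK, hJI, hJJ, hJK, hKI, hKJ, hKK] at e1 e2 e3 e4 e5 e6 e7 e8 e9 e10 e11 e12 e13 e14 e15 e16 e17 e18 e19 e20 e21 e22 e23 e24 e25 e26 e27 e28
  linarith [e1, e2, e3, e4, e5, e6, e7, e8, e9, e10, e11, e12, e13, e14, e15, e16, e17, e18, e19, e20, e21, e22, e23, e24, e25, e26, e27, e28]

end AuxHKT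


section KeyHKT

/-- Pointwise quaternion relations derived from a hypercomplex structure. -/
lemma hyc_IK {U : Set E} {I J K : E → E →L[ℝ] E} (hhc : IsHypercomplexOn U I J K)
    {y : E} (hy : y ∈ U) (w : E) : I y (K y w) = -(J y w) := by
  rw [← hhc.mulIJ y hy w]; exact hhc.acsI.square y hy _

lemma hyc_KJ {U : Set E} {I J K : E → E →L[ℝ] E} (hhc : IsHypercomplexOn U I J K)
    {y : E} (hy : y ∈ U) (w : E) : K y (J y w) = -(I y w) := by
  rw [← hhc.mulIJ y hy (J y w), hhc.acsJ.square y hy w, map_neg]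

lemma hyc_JK {U : Set E} {I J K : E → E →L[ℝ] E} (hhc : IsHypercomplexOn U I J K)
    {y : E} (hy : y ∈ U) (w : E) : J y (K y w) = I y w := by
  rw [← hhc.mulIJ y hy w, hhc.mulJI y hy (J y w), hyc_KJ hhc hy w, neg_neg]

lemma hyc_KI {U : Set E} {I J K : E → E →L[ℝ] E} (hhc : IsHypercomplexOn U I J K)
    {y : E} (hy : y ∈ U) (w : E) : K y (I y w) = J y w := by
  rw [← hhc.mulIJ y hy (I y w), hhc.mulJI y hy w, map_neg, hyc_IK hhc hy w, neg_neg]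

lemma hyc_KK {U : Set E} {I J K : E → E →L[ℝ] E} (hhc : IsHypercomplexOn U I J K)
    {y : E} (hy : y ∈ U) (w : E) : K y (K y w) = -w := by
  rw [← hhc.mulIJ y hy (K y w), hyc_JK hhc hy w]; exact hhc.acsI.square y hy w

/-- The main pointwise computation. -/
lemma key (U : Set E) (hU : IsOpen U) (I J K : E → E →L[ℝ] E) (g : E → E →ₗ[ℝ] E →ₗ[ℝ] ℝ)
    (hhc : IsHypercomplexOn U I J K) (hhk : IsHyperKaehlerOn U I J K g)
    (ν : E → ℝ) (hν : ContDiffOn ℝ (⊤ : ℕ∞) ν U)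
    (hpot : ∀ x ∈ U, ∀ u v, kaehlerForm I g x u v = d1 (dc0 I ν) x u v)
    (x : E) (hx : x ∈ U) (u v : E) :
    kaehlerForm J g x u v = (1 / 2) * (d1 (dc0 J ν) x u v + dc1 K (dc0 I ν) x u v) ∧
    kaehlerForm K g x u v = (1 / 2) * (d1 (dc0 K ν) x u v + dc1 I (dc0 J ν) x u v) ∧
    kaehlerForm I g x u v = (1 / 2) * (d1 (dc0 I ν) x u v + dc1 J (dc0 K ν) x u v) := by
  have hUx : U ∈ nhds x := hU.mem_nhds hx
  have dI : DifferentiableAt ℝ I x := (hhc.acsI.smooth.contDiffAt hUx).differentiableAt (by simp)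
  have dJ : DifferentiableAt ℝ J x := (hhc.acsJ.smooth.contDiffAt hUx).differentiableAt (by simp)
  have dK : DifferentiableAt ℝ K x := (hhc.acsK.smooth.contDiffAt hUx).differentiableAt (by simp)
  have hνx : ContDiffAt ℝ (⊤ : ℕ∞) ν x := hν.contDiffAt hUx
  have dν2 : DifferentiableAt ℝ (fderiv ℝ ν) x :=
    (hνx.fderiv_right (m := (⊤:ℕ∞)) (by exact_mod_cast le_top)).differentiableAt (by simp)
  -- quaternion relations at x
  have hIIx : ∀ w, I x (I x w) = -w := hhc.acsI.square x hx
  have hJJx : ∀ w, J x (J x w) = -w := hhc.acsJ.square x hx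
  have hKKx : ∀ w, K x (K x w) = -w := hyc_KK hhc hx
  have hIJx : ∀ w, I x (J x w) = K x w := hhc.mulIJ x hx
  have hJIx : ∀ w, J x (I x w) = -(K x w) := hhc.mulJI x hx
  have hIKx : ∀ w, I x (K x w) = -(J x w) := hyc_IK hhc hx
  have hKIx : ∀ w, K x (I x w) = J x w := hyc_KI hhc hx
  have hJKx : ∀ w, J x (K x w) = I x w := hyc_JK hhc hx
  have hKJx : ∀ w, K x (J x w) = -(I x w) := hyc_KJ hhc hx
  -- first-jet relations
  have hSA : ∀ w z, I x (fderiv ℝ I x w z) + fderiv ℝ I x w (I x z) = 0 := by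
    intro w z
    simpa using comp_struct_deriv hU hx dI dI (hasFDerivAt_const (-z) x)
      (fun y hy => hhc.acsI.square y hy z) w
  have hSB : ∀ w z, J x (fderiv ℝ J x w z) + fderiv ℝ J x w (J x z) = 0 := by
    intro w z
    simpa using comp_struct_deriv hU hx dJ dJ (hasFDerivAt_const (-z) x)
      (fun y hy => hhc.acsJ.square y hy z) w
  have hP1 : ∀ w z, I x (fderiv ℝ J x w z) + fderiv ℝ I x w (J x z) = fderiv ℝ K x w z := by
    intro w z
    simpa using comp_struct_deriv hU hx dI dJ (hasFDerivAt_apply_const dK z)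
      (fun y hy => hhc.mulIJ y hy z) w
  have hP2 : ∀ w z, J x (fderiv ℝ I x w z) + fderiv ℝ J x w (I x z) = -(fderiv ℝ K x w z) := by
    intro w z
    simpa using comp_struct_deriv hU hx dJ dI ((hasFDerivAt_apply_const dK z).neg)
      (fun y hy => hhc.mulJI y hy z) w
  -- integrability
  have fdsI : ∀ b : E, fderiv ℝ (fun y => I y b) x = (fderiv ℝ I x).flip b :=
    fun b => (hasFDerivAt_apply_const dI b).fderiv
  have fdsJ : ∀ b : E, fderiv ℝ (fun y => J y b) x = (fderiv ℝ J x).flip b :=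
    fun b => (hasFDerivAt_apply_const dJ b).fderiv
  have hNA : ∀ a b, fderiv ℝ I x (I x a) b - fderiv ℝ I x (I x b) a
      + I x (fderiv ℝ I x b a) - I x (fderiv ℝ I x a b) = 0 := by
    intro a b
    have h0 := hhc.intI a b x hx
    simp only [nijTensor, lieBracket, fdsI, fderiv_fun_const, Pi.zero_apply,
      ContinuousLinearMap.flip_apply, ContinuousLinearMap.zero_apply, zero_sub, sub_zero,
      map_neg, map_sub, sub_self] at h0
    linear_combination (norm := module) h0
  have hNB : ∀ a b, fderiv ℝ J x (J x a) b - fderiv ℝ J x (J x b) a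
      + J x (fderiv ℝ J x b a) - J x (fderiv ℝ J x a b) = 0 := by
    intro a b
    have h0 := hhc.intJ a b x hx
    simp only [nijTensor, lieBracket, fdsJ, fderiv_fun_const, Pi.zero_apply,
      ContinuousLinearMap.flip_apply, ContinuousLinearMap.zero_apply, zero_sub, sub_zero,
      map_neg, map_sub, sub_self] at h0
    linear_combination (norm := module) h0
  -- Hessian symmetry
  have hev : ∀ᶠ y in nhds x, HasFDerivAt ν (fderiv ℝ ν y) y := by
    filter_upwards [hUx] with y hy using
      (((hν.differentiableOn (by simp)) y hy).differentiableAt (hU.mem_nhds hy)).hasFDerivAt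
  have hyS : ∀ a b : E, fderiv ℝ (fderiv ℝ ν) x a b = fderiv ℝ (fderiv ℝ ν) x b a :=
    fun a b => second_derivative_symmetric_of_eventually hev dν2.hasFDerivAt a b
  -- hermitian data
  have hsym := hhk.hyperHermitian.symm x hx
  have hermI := hhk.hyperHermitian.hermI x hx
  have hermJ := hhk.hyperHermitian.hermJ x hx
  have hermK := hhk.hyperHermitian.hermK x hx
  refine ⟨?_, ?_, ?_⟩
  · -- F_J
    have hrel : ∀ z, (fun y => act1 K (dc0 I ν) y z) =ᶠ[nhds x] (fun y => dc0 J ν y z) := by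
      intro z
      filter_upwards [hUx] with y hy
      simp only [act1, dc0, d0, neg_neg]
      rw [hyc_IK hhc hy z, map_neg]
    rw [dc1_eq_of_rel hrel u v, d1_dc0_eq hU hx hν dJ u v,
        d1_dc0_eq hU hx hν dJ (K x u) (K x v)]
    simp only [kaehlerForm, hJKx]
    have h1 := hpot x hx u (K x v)
    rw [d1_dc0_eq hU hx hν dI] at h1
    simp only [kaehlerForm, hIKx, map_neg] at h1
    have h2 := hpot x hx v (K x u)
    rw [d1_dc0_eq hU hx hν dI] at h2
    simp only [kaehlerForm, hIKx, map_neg] at h2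
    have cert := certA (I x) (J x) (K x) (fderiv ℝ I x) (fderiv ℝ J x) (fderiv ℝ K x)
      (fderiv ℝ ν x) hIIx hIJx hIKx hJIx hJJx hJKx hKIx hKJx hKKx hSA hSB hP1 hP2 hNA hNB u v
    have r1 := hermJ (I x u) (K x v)
    simp only [hJIx, hJKx, map_neg, LinearMap.neg_apply] at r1
    have r2 := hermK (I x v) (K x u)
    simp only [hKIx, hKKx, map_neg, LinearMap.neg_apply] at r2
    have r3 := hermJ (J x u) v
    simp only [hJJx, map_neg, LinearMap.neg_apply] at r3
    have r4 := hsym (K x u) (I x v)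
    have r5 := hsym (J x v) u
    linarith [h1, h2, cert, r1, r2, r3, r4, r5]
  · -- F_K
    have hrel : ∀ z, (fun y => act1 I (dc0 J ν) y z) =ᶠ[nhds x] (fun y => dc0 K ν y z) := by
      intro z
      filter_upwards [hUx] with y hy
      simp only [act1, dc0, d0, neg_neg]
      rw [hhc.mulJI y hy z, map_neg]
    rw [dc1_eq_of_rel hrel u v, d1_dc0_eq hU hx hν dK u v,
        d1_dc0_eq hU hx hν dK (I x u) (I x v)]
    simp only [kaehlerForm, hKIx]
    have h1 := hpot x hx u (J x v)
    rw [d1_dc0_eq hU hx hν dI] at h1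
    simp only [kaehlerForm, hIJx] at h1
    have h2 := hpot x hx v (J x u)
    rw [d1_dc0_eq hU hx hν dI] at h2
    simp only [kaehlerForm, hIJx] at h2
    have cert := certB (I x) (J x) (K x) (fderiv ℝ I x) (fderiv ℝ J x) (fderiv ℝ K x)
      (fderiv ℝ ν x) hIIx hIJx hIKx hJIx hJJx hJKx hKIx hKJx hKKx hSA hSB hP1 hP2 hNA hNB u v
    have s1 := hermJ (I x u) (J x v)
    simp only [hJIx, hJJx, map_neg, LinearMap.neg_apply, neg_neg] at s1
    have s2 := hermI (I x v) (J x u)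
    simp only [hIIx, hIJx, map_neg, LinearMap.neg_apply] at s2
    have s3 := hsym v (K x u)
    have hy1 := hyS (I x u) (J x v)
    have hy2 := hyS (J x u) (I x v)
    linarith [h1, h2, cert, s1, s2, s3, hy1, hy2]
  · -- F_I
    have hrel : ∀ z, (fun y => act1 J (dc0 K ν) y z) =ᶠ[nhds x] (fun y => dc0 I ν y z) := by
      intro z
      filter_upwards [hUx] with y hy
      simp only [act1, dc0, d0, neg_neg]
      rw [hyc_KJ hhc hy z, map_neg]
    rw [dc1_eq_of_rel hrel u v, ← hpot x hx u v, ← hpot x hx (J x u) (J x v)]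
    simp only [kaehlerForm, hIJx]
    have t1 := hermJ (I x u) v
    simp only [hJIx, map_neg, LinearMap.neg_apply] at t1
    linarith [t1]

end KeyHKT


/-- Let `g` be a hyper-Kähler metric on a hypercomplex manifold
`(M,I,J,K)` and let `ν` be a Kähler potential for the complex structure `I`, i.e.
`F_I = dd_I ν`.  Then `F_J = ½(dd_J + d_K d_I)ν` and `F_K = ½(dd_K + d_I d_J)ν`; in
particular `ν` is an HKT potential for `g`. -/
theorem kaehler_potential_of_hyperkaehler_is_hkt_potential
    (U : Set E) (hU : IsOpen U) (I J K : E → E →L[ℝ] E) (g : E → E →ₗ[ℝ] E →ₗ[ℝ] ℝ)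
    (hhc : IsHypercomplexOn U I J K) (hhk : IsHyperKaehlerOn U I J K g)
    (ν : E → ℝ) (hν : ContDiffOn ℝ (⊤ : ℕ∞) ν U)
    (hpot : ∀ x ∈ U, ∀ u v, kaehlerForm I g x u v = d1 (dc0 I ν) x u v) :
    (∀ x ∈ U, ∀ u v, kaehlerForm J g x u v
        = (1 / 2) * (d1 (dc0 J ν) x u v + dc1 K (dc0 I ν) x u v)) ∧
    (∀ x ∈ U, ∀ u v, kaehlerForm K g x u v
        = (1 / 2) * (d1 (dc0 K ν) x u v + dc1 I (dc0 J ν) x u v)) ∧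
    IsHKTPotentialOn U I J K g ν := by
  exact ⟨fun x hx u v => (key U hU I J K g hhc hhk ν hν hpot x hx u v).1,
    fun x hx u v => (key U hU I J K g hhc hhk ν hν hpot x hx u v).2.1,
    fun x hx u v =>
      ⟨(key U hU I J K g hhc hhk ν hν hpot x hx u v).2.2,
       (key U hU I J K g hhc hhk ν hν hpot x hx u v).1,
       (key U hU I J K g hhc hhk ν hν hpot x hx u v).2.1⟩⟩

end HKTPaper
end
end

section
/- On a hypercomplex manifold, for any 1-form θ the Salamon differential satisfies Dθ = (dθ)^{2,0} + (dθ)^{0,2} + ½((dθ)^{1,1} − J(dθ)^{1,1}), where the type decomposition of dθ is taken with respect to the complex structure I. -/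
noncomputable section

open Function

namespace HKTPaper

variable {E : Type*} [NormedAddCommGroup E] [NormedSpace ℝ E] [FiniteDimensional ℝ E]

/-- The complex structure `aI + bJ + cK` at the point `x`. -/
def unitCombo (I J K : E → E →L[ℝ] E) (a b c : ℝ) (x : E) : E →L[ℝ] E :=
  a • I x + b • J x + c • K x

/-- Pointwise membership in `A² = Σ_{𝓘 ∈ S²} (Λ^{2,0}_𝓘 ⊕ Λ^{0,2}_𝓘)`: the span of the
alternating bilinear forms `φ` with `φ(𝓘·,𝓘·) = -φ` for some `𝓘 ∈ S²`. -/
def InA2Pt (I J K : E → E →L[ℝ] E) (x : E) (ψ : E → E → ℝ) : Prop :=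
  ψ ∈ Submodule.span ℝ {φ : E → E → ℝ |
    (∃ B : E →ₗ[ℝ] E →ₗ[ℝ] ℝ, (∀ u v, φ u v = B u v) ∧ ∀ u, B u u = 0) ∧
    ∃ a b c : ℝ, a ^ 2 + b ^ 2 + c ^ 2 = 1 ∧
      ∀ u v, φ (unitCombo I J K a b c x u) (unitCombo I J K a b c x v) = -φ u v}

/-- Pointwise membership in `B² = ∩_{𝓘 ∈ S²} Λ^{1,1}_𝓘`: invariance `ψ(𝓘·,𝓘·) = ψ`
under every `𝓘 ∈ S²`. -/
def InB2Pt (I J K : E → E →L[ℝ] E) (x : E) (ψ : E → E → ℝ) : Prop :=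
  ∀ a b c : ℝ, a ^ 2 + b ^ 2 + c ^ 2 = 1 →
    ∀ u v, ψ (unitCombo I J K a b c x u) (unitCombo I J K a b c x v) = ψ u v

/-- `G = Dθ` on `U` for a 1-form `θ`, where `D = η ∘ d` is the Salamon differential:
`G` is a section of `A²` and `dθ - G` is a section of `B² = ker η`. -/
def IsSalamonDOn (U : Set E) (I J K : E → E →L[ℝ] E)
    (θ : E → E → ℝ) (G : E → E → E → ℝ) : Prop :=
  (∀ x ∈ U, InA2Pt I J K x (G x)) ∧
  (∀ x ∈ U, InB2Pt I J K x (fun u v => d1 θ x u v - G x u v))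

/-- The `(1,1)`-part of a 2-form with respect to `I`: `ω^{1,1} = ½(ω + Iω)`. -/
def part11 (I : E → E →L[ℝ] E) (ω : E → E → E → ℝ) : E → E → E → ℝ := fun x u v =>
  (1 / 2) * (ω x u v + ω x (I x u) (I x v))

/-- Auxiliary: on an open set where a 1-form is smooth, its exterior derivative at a
point is a (alternating) bilinear form. -/
lemma d1_bilinear_aux (U : Set E) (hU : IsOpen U) (θ : E → E →ₗ[ℝ] ℝ)
    (hθ : ∀ u : E, ContDiffOn ℝ (⊤ : ℕ∞) (fun x => θ x u) U)
    {x : E} (hx : x ∈ U) :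
    ∃ B : E →ₗ[ℝ] E →ₗ[ℝ] ℝ, (∀ u v, d1 (fun y w => θ y w) x u v = B u v)
      ∧ ∀ u, B u u = 0 := by
  have hdiff : ∀ u : E, DifferentiableAt ℝ (fun y => θ y u) x := fun u =>
    ((hθ u).contDiffAt (hU.mem_nhds hx)).differentiableAt (by simp)
  have hadd : ∀ u v : E, fderiv ℝ (fun y => θ y (u + v)) x
      = fderiv ℝ (fun y => θ y u) x + fderiv ℝ (fun y => θ y v) x := by
    intro u v
    have h : (fun y => θ y (u + v)) = fun y => θ y u + θ y v := by
      funext y; exact map_add (θ y) u v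
    rw [h, fderiv_fun_add (hdiff u) (hdiff v)]
  have hsmul : ∀ (c : ℝ) (u : E), fderiv ℝ (fun y => θ y (c • u)) x
      = c • fderiv ℝ (fun y => θ y u) x := by
    intro c u
    have h : (fun y => θ y (c • u)) = fun y => c • θ y u := by
      funext y; exact map_smul (θ y) c u
    rw [h, fderiv_fun_const_smul (hdiff u)]
  refine ⟨LinearMap.mk₂ ℝ
      (fun u v => fderiv ℝ (fun y => θ y v) x u - fderiv ℝ (fun y => θ y u) x v)
      ?_ ?_ ?_ ?_, fun u v => rfl, fun u => sub_self _⟩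
  · intro m₁ m₂ n
    beta_reduce
    rw [hadd, (fderiv ℝ (fun y => θ y n) x).map_add, ContinuousLinearMap.add_apply]; ring
  · intro c m n
    beta_reduce
    rw [hsmul, (fderiv ℝ (fun y => θ y n) x).map_smul, ContinuousLinearMap.smul_apply,
      smul_eq_mul, smul_eq_mul]; simp only [smul_eq_mul]; ring
  · intro m n₁ n₂
    beta_reduce
    rw [hadd, (fderiv ℝ (fun y => θ y m) x).map_add, ContinuousLinearMap.add_apply]; ring
  · intro c m n
    beta_reduce
    rw [hsmul, (fderiv ℝ (fun y => θ y m) x).map_smul, ContinuousLinearMap.smul_apply,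
      smul_eq_mul, smul_eq_mul]; simp only [smul_eq_mul]; ring

/-- On a hypercomplex manifold, for any 1-form `θ` the Salamon
differential satisfies
`Dθ = (dθ)^{2,0} + (dθ)^{0,2} + ½((dθ)^{1,1} - J(dθ)^{1,1})`,
the type decomposition of `dθ` being taken with respect to `I`
(so `(dθ)^{2,0} + (dθ)^{0,2} = dθ - (dθ)^{1,1}`). -/
theorem salamon_differential_of_one_form_formula
    (U : Set E) (hU : IsOpen U) (I J K : E → E →L[ℝ] E)
    (hhc : IsHypercomplexOn U I J K)
    (θ : E → E →ₗ[ℝ] ℝ)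
    (hθsmooth : ∀ u : E, ContDiffOn ℝ (⊤ : ℕ∞) (fun x => θ x u) U) :
    IsSalamonDOn U I J K (fun x u => θ x u)
      (fun x u v =>
        (d1 (fun y w => θ y w) x u v - part11 I (d1 fun y w => θ y w) x u v)
          + (1 / 2) * (part11 I (d1 fun y w => θ y w) x u v
              - act2 J (part11 I (d1 fun y w => θ y w)) x u v)) := by
  constructor
  · -- the A² part
    intro x hx
    obtain ⟨B, hωB, halt⟩ := d1_bilinear_aux U hU θ hθsmooth hx
    have hA2 := hhc.acsI.square x hx
    have hB2 := hhc.acsJ.square x hx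
    have hAB := hhc.mulIJ x hx
    set Iₗ : E →ₗ[ℝ] E := (I x : E →ₗ[ℝ] E) with hIl
    set Jₗ : E →ₗ[ℝ] E := (J x : E →ₗ[ℝ] E) with hJl
    -- the two anti-invariant pieces
    set φ₁ : E → E → ℝ := fun u v => (1 / 2) * (B u v - B (I x u) (I x v)) with hφ₁
    set φ₂ : E → E → ℝ := fun u v => (1 / 4) * (B u v + B (I x u) (I x v)
      - B (J x u) (J x v) - B (I x (J x u)) (I x (J x v))) with hφ₂
    have hmem₁ : φ₁ ∈ {φ : E → E → ℝ |
        (∃ B : E →ₗ[ℝ] E →ₗ[ℝ] ℝ, (∀ u v, φ u v = B u v) ∧ ∀ u, B u u = 0) ∧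
        ∃ a b c : ℝ, a ^ 2 + b ^ 2 + c ^ 2 = 1 ∧
          ∀ u v, φ (unitCombo I J K a b c x u) (unitCombo I J K a b c x v) = -φ u v} := by
      refine ⟨⟨(1 / 2 : ℝ) • (B - B.compl₁₂ Iₗ Iₗ), ?_, ?_⟩, 1, 0, 0, by norm_num, ?_⟩
      · intro u v
        simp [hφ₁, hIl, LinearMap.compl₁₂_apply, smul_eq_mul]
        try ring
      · intro u
        simp [hIl, LinearMap.compl₁₂_apply, halt]
      · intro u v
        simp only [unitCombo, one_smul, zero_smul, add_zero, hφ₁]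
        simp [hA2, map_neg]
        try ring
    have hmem₂ : φ₂ ∈ {φ : E → E → ℝ |
        (∃ B : E →ₗ[ℝ] E →ₗ[ℝ] ℝ, (∀ u v, φ u v = B u v) ∧ ∀ u, B u u = 0) ∧
        ∃ a b c : ℝ, a ^ 2 + b ^ 2 + c ^ 2 = 1 ∧
          ∀ u v, φ (unitCombo I J K a b c x u) (unitCombo I J K a b c x v) = -φ u v} := by
      refine ⟨⟨(1 / 4 : ℝ) • (B + B.compl₁₂ Iₗ Iₗ - B.compl₁₂ Jₗ Jₗ
          - B.compl₁₂ (Iₗ ∘ₗ Jₗ) (Iₗ ∘ₗ Jₗ)), ?_, ?_⟩, 0, 1, 0, by norm_num, ?_⟩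
      · intro u v
        simp [hφ₂, hIl, hJl, LinearMap.compl₁₂_apply, smul_eq_mul]
        try ring
      · intro u
        simp [hIl, hJl, LinearMap.compl₁₂_apply, halt]
      · intro u v
        simp only [unitCombo, one_smul, zero_smul, add_zero, zero_add, hφ₂]
        simp [hA2, hB2, hAB, map_neg]
        try ring
    have hsum : (fun u v =>
        (d1 (fun y w => θ y w) x u v - part11 I (d1 fun y w => θ y w) x u v)
          + (1 / 2) * (part11 I (d1 fun y w => θ y w) x u v
              - act2 J (part11 I (d1 fun y w => θ y w)) x u v)) = φ₁ + φ₂ := by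
      funext u v
      simp only [part11, act2, hωB, Pi.add_apply, hφ₁, hφ₂]
      ring
    unfold InA2Pt
    beta_reduce
    rw [hsum]
    exact Submodule.add_mem _ (Submodule.subset_span hmem₁) (Submodule.subset_span hmem₂)
  · -- the B² part
    intro x hx
    obtain ⟨B, hωB, halt⟩ := d1_bilinear_aux U hU θ hθsmooth hx
    have hA2 := hhc.acsI.square x hx
    have hB2 := hhc.acsJ.square x hx
    have hC2 := hhc.acsK.square x hx
    have hAB := hhc.mulIJ x hx
    have hBA := hhc.mulJI x hx
    have hCB : ∀ v, K x (J x v) = -(I x v) := by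
      intro v
      have h1 := hAB (J x v)
      rw [hB2 v, map_neg] at h1
      exact h1.symm
    have hBC : ∀ v, J x (K x v) = I x v := by
      intro v
      have h1 := hBA (J x v)
      rw [hAB v, hCB v, neg_neg] at h1
      exact h1
    have hAC : ∀ v, I x (K x v) = -(J x v) := by
      intro v
      rw [← hAB v]
      exact hA2 (J x v)
    have hCA : ∀ v, K x (I x v) = J x v := by
      intro v
      have h1 := hAB (I x v)
      rw [hBA v, map_neg, hAC v, neg_neg] at h1
      exact h1.symm
    intro a b c habc u v
    simp only [part11, act2, hωB, unitCombo, ContinuousLinearMap.add_apply,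
      ContinuousLinearMap.coe_smul', Pi.smul_apply, map_add, map_smul, map_neg,
      LinearMap.add_apply, LinearMap.smul_apply, LinearMap.neg_apply, smul_eq_mul,
      hA2, hB2, hC2, hAB, hBA, hBC, hCB, hCA, hAC, smul_neg, neg_neg, mul_neg, neg_mul]
    linear_combination ((1 : ℝ) / 4 * (B u v + B (I x u) (I x v)
      + B (J x u) (J x v) + B (K x u) (K x v))) * habc

end HKTPaper
end
end

section
/- Let F be a smooth Salamon (1,1)-form on a hypercomplex manifold (M,I,J,K) with DF = 0, let ∇^Ob be the Obata connection, and set G = F(J·,·). Then for all vector fields U, V, W: dF(IU, IV, IW) = ∇^Ob F(KU,KV,IW) + ∇^Ob F(KV,KW,IU) + ∇^Ob F(KW,KU,IV) = dG(KU, KV, KW); in other words I dF_I = K dF_K where F_I = F and F_K = G. -/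
noncomputable section

open Function

namespace HKTPaper

variable {E : Type*} [NormedAddCommGroup E] [NormedSpace ℝ E] [FiniteDimensional ℝ E]

/-- `D`-closedness of a `(1,1)`-form `F`: for every `𝓘 ∈ S²`,
`dF(U,V,W) = dF(𝓘U,𝓘V,W) + dF(𝓘U,V,𝓘W) + dF(U,𝓘V,𝓘W)`. -/
def DClosed2On (U : Set E) (I J K : E → E →L[ℝ] E) (F : E → E → E → ℝ) : Prop :=
  ∀ x ∈ U, ∀ a b c : ℝ, a ^ 2 + b ^ 2 + c ^ 2 = 1 → ∀ u v w,
    d2 F x u v w =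
      d2 F x (unitCombo I J K a b c x u) (unitCombo I J K a b c x v) w
        + d2 F x (unitCombo I J K a b c x u) v (unitCombo I J K a b c x w)
        + d2 F x u (unitCombo I J K a b c x v) (unitCombo I J K a b c x w)

/-- The Obata connection, recorded by its Christoffel tensor `Γ`:
`∇_u Y = D_u Y + Γ(u, Y)`. -/
structure IsObataOn (U : Set E) (I J K : E → E →L[ℝ] E)
    (Γ : E → E →L[ℝ] E →L[ℝ] E) : Prop where
  torsionFree : ∀ x ∈ U, ∀ u v, Γ x u v = Γ x v u
  parI : ∀ x ∈ U, ∀ u v, fderiv ℝ (fun y => I y v) x u + Γ x u (I x v) = I x (Γ x u v)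
  parJ : ∀ x ∈ U, ∀ u v, fderiv ℝ (fun y => J y v) x u + Γ x u (J x v) = J x (Γ x u v)
  parK : ∀ x ∈ U, ∀ u v, fderiv ℝ (fun y => K y v) x u + Γ x u (K x v) = K x (Γ x u v)

/-- Covariant derivative of a 2-form: `∇F(X,Y,Z) = (∇_X F)(Y,Z)`. -/
def covDer2 (Γ : E → E →L[ℝ] E →L[ℝ] E) (F : E → E → E → ℝ) : E → E → E → E → ℝ :=
  fun x u v w => fderiv ℝ (fun y => F y v w) x u - F x (Γ x u v) w - F x v (Γ x u w)

noncomputable def Fcl (F : E → E →ₗ[ℝ] E →ₗ[ℝ] ℝ) : E → E →L[ℝ] E →L[ℝ] ℝ := fun y =>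
  LinearMap.toContinuousLinearMap
    (((LinearMap.toContinuousLinearMap : (E →ₗ[ℝ] ℝ) ≃ₗ[ℝ] (E →L[ℝ] ℝ)) :
        (E →ₗ[ℝ] ℝ) →ₗ[ℝ] (E →L[ℝ] ℝ)).comp (F y))

lemma Fcl_apply (F : E → E →ₗ[ℝ] E →ₗ[ℝ] ℝ) (y u v : E) : Fcl F y u v = F y u v := by
  simp [Fcl]

lemma Fcl_contDiffOn {U : Set E} (F : E → E →ₗ[ℝ] E →ₗ[ℝ] ℝ)
    (hF : ∀ u v : E, ContDiffOn ℝ (⊤ : ℕ∞) (fun x => F x u v) U) :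
    ContDiffOn ℝ (⊤ : ℕ∞) (Fcl F) U := by
  rw [contDiffOn_clm_apply]; intro u
  rw [contDiffOn_clm_apply]; intro v
  exact (hF u v).congr fun y _ => Fcl_apply F y u v

omit [FiniteDimensional ℝ E] in
lemma fderiv_apply2 (Fc : E → E →L[ℝ] E →L[ℝ] ℝ) {x : E} (hFc : DifferentiableAt ℝ Fc x)
    {α β : E → E} (hα : DifferentiableAt ℝ α x) (hβ : DifferentiableAt ℝ β x) (u : E) :
    fderiv ℝ (fun y => Fc y (α y) (β y)) x u
      = fderiv ℝ Fc x u (α x) (β x) + Fc x (fderiv ℝ α x u) (β x)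
        + Fc x (α x) (fderiv ℝ β x u) := by
  have h1 : DifferentiableAt ℝ (fun y => Fc y (α y)) x := hFc.clm_apply hα
  have e1 : fderiv ℝ (fun y => Fc y (α y)) x
      = (Fc x).comp (fderiv ℝ α x) + (fderiv ℝ Fc x).flip (α x) := fderiv_clm_apply hFc hα
  have e2 : fderiv ℝ (fun y => Fc y (α y) (β y)) x
      = ((fun y => Fc y (α y)) x).comp (fderiv ℝ β x)
        + (fderiv ℝ (fun y => Fc y (α y)) x).flip (β x) := fderiv_clm_apply h1 hβ
  rw [e2]
  simp only [e1, ContinuousLinearMap.add_apply, ContinuousLinearMap.flip_apply,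
    ContinuousLinearMap.comp_apply]
  ring


/-- Let `F` be a smooth Salamon `(1,1)`-form (`IF = F`, `JF = -F`) on a
hypercomplex manifold with `DF = 0`, let `∇^Ob` be the Obata connection and `G = F(J·,·)`.
Then `dF(IU,IV,IW) = ∇^Ob F(KU,KV,IW) + ∇^Ob F(KV,KW,IU) + ∇^Ob F(KW,KU,IV)
= dG(KU,KV,KW)`; in other words `I dF_I = K dF_K`, where `F_I = F` and `F_K = G`. -/
theorem D_closed_one_one_form_gives_IdFI_eq_KdFK
    (U : Set E) (hU : IsOpen U) (I J K : E → E →L[ℝ] E)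
    (hhc : IsHypercomplexOn U I J K)
    (F : E → E →ₗ[ℝ] E →ₗ[ℝ] ℝ)
    (hFsmooth : ∀ u v : E, ContDiffOn ℝ (⊤ : ℕ∞) (fun x => F x u v) U)
    (hFalt : ∀ x ∈ U, ∀ u, F x u u = 0)
    (hFI : ∀ x ∈ U, ∀ u v, F x (I x u) (I x v) = F x u v)
    (hFJ : ∀ x ∈ U, ∀ u v, F x (J x u) (J x v) = -F x u v)
    (hDF : DClosed2On U I J K (fun x u v => F x u v))
    (ΓOb : E → E →L[ℝ] E →L[ℝ] E) (hOb : IsObataOn U I J K ΓOb)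
    (G : E → E → E → ℝ) (hG : ∀ x ∈ U, ∀ u v, G x u v = F x (J x u) v) :
    ∀ x ∈ U, ∀ u v w,
      (d2 (fun y p q => F y p q) x (I x u) (I x v) (I x w)
          = covDer2 ΓOb (fun y p q => F y p q) x (K x u) (K x v) (I x w)
            + covDer2 ΓOb (fun y p q => F y p q) x (K x v) (K x w) (I x u)
            + covDer2 ΓOb (fun y p q => F y p q) x (K x w) (K x u) (I x v)) ∧
      (d2 (fun y p q => F y p q) x (I x u) (I x v) (I x w)
          = d2 G x (K x u) (K x v) (K x w)) ∧
      (act3 I (d2 fun y p q => F y p q) x u v w = act3 K (d2 G) x u v w) := by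
  intro x hx u v w
  have hxU : U ∈ nhds x := hU.mem_nhds hx
  -- quaternion algebra at points of U
  have hII : ∀ y ∈ U, ∀ a, I y (I y a) = -a := fun y hy => hhc.acsI.square y hy
  have hJJ : ∀ y ∈ U, ∀ a, J y (J y a) = -a := fun y hy => hhc.acsJ.square y hy
  have hKK : ∀ y ∈ U, ∀ a, K y (K y a) = -a := fun y hy => hhc.acsK.square y hy
  have hIJ : ∀ y ∈ U, ∀ a, I y (J y a) = K y a := fun y hy => hhc.mulIJ y hy
  have hJI : ∀ y ∈ U, ∀ a, J y (I y a) = -(K y a) := fun y hy => hhc.mulJI y hy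
  have hIK : ∀ y ∈ U, ∀ a, I y (K y a) = -(J y a) := by
    intro y hy a
    rw [← hIJ y hy a, hII y hy (J y a)]
  have hKI : ∀ y ∈ U, ∀ a, K y (I y a) = J y a := by
    intro y hy a
    have := congrArg (I y) (hJI y hy a)
    rw [map_neg, hIK y hy a, neg_neg] at this
    rw [← hIJ y hy (I y a), this]
  have hKJ : ∀ y ∈ U, ∀ a, K y (J y a) = -(I y a) := by
    intro y hy a
    rw [← hIJ y hy (J y a), hJJ y hy a, map_neg]
  have hJK : ∀ y ∈ U, ∀ a, J y (K y a) = I y a := by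
    intro y hy a
    rw [← hIJ y hy a, hJI y hy (J y a), hKJ y hy a, neg_neg]
  -- pointwise facts about F
  have hFanti : ∀ y ∈ U, ∀ a b, F y a b = -F y b a := by
    intro y hy a b
    have h := hFalt y hy (a + b)
    simp only [map_add, LinearMap.add_apply] at h
    rw [hFalt y hy a, hFalt y hy b] at h
    linarith
  have hFK : ∀ y ∈ U, ∀ a b, F y (K y a) (K y b) = -F y a b := by
    intro y hy a b
    rw [← hIJ y hy a, ← hIJ y hy b, hFI y hy, hFJ y hy]
  -- differentiability
  have hFd : ∀ a b, DifferentiableAt ℝ (fun y => F y a b) x := fun a b =>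
    ((hFsmooth a b).contDiffAt hxU).differentiableAt (by simp)
  have hFcd : DifferentiableAt ℝ (Fcl F) x :=
    ((Fcl_contDiffOn F hFsmooth).contDiffAt hxU).differentiableAt (by simp)
  have hLd : ∀ (L : E → E →L[ℝ] E), ContDiffOn ℝ (⊤ : ℕ∞) L U →
      ∀ a, DifferentiableAt ℝ (fun y => L y a) x := by
    intro L hL a
    exact (((contDiffOn_clm_apply.mp hL) a).contDiffAt hxU).differentiableAt (by simp)
  have hId : ∀ a, DifferentiableAt ℝ (fun y => I y a) x := hLd I hhc.acsI.smooth
  have hJd : ∀ a, DifferentiableAt ℝ (fun y => J y a) x := hLd J hhc.acsJ.smooth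
  have hKd : ∀ a, DifferentiableAt ℝ (fun y => K y a) x := hLd K hhc.acsK.smooth
  -- fderiv of F with constant arguments, via Fcl
  have hconst : ∀ a b u', fderiv ℝ (fun y => F y a b) x u' = fderiv ℝ (Fcl F) x u' a b := by
    intro a b u'
    have h := fderiv_apply2 (Fcl F) hFcd (differentiableAt_const a) (differentiableAt_const b) u'
    simp only [fderiv_fun_const, Pi.zero_apply, ContinuousLinearMap.zero_apply, map_zero,
      ContinuousLinearMap.zero_apply, add_zero] at h
    have he : (fun y => Fcl F y a b) = (fun y => F y a b) := funext fun y => Fcl_apply F y a b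
    rw [he] at h
    exact h
  -- abbreviation for the covariant derivative tensor at x
  set Pc : E → E → E → ℝ := covDer2 ΓOb (fun y p q => F y p q) x with hPdef
  have Punf : ∀ a b c, Pc a b c
      = fderiv ℝ (fun y => F y b c) x a - F x (ΓOb x a b) c - F x b (ΓOb x a c) := by
    intro a b c; rw [hPdef]; rfl
  have hPneg1 : ∀ a b c, Pc (-a) b c = -Pc a b c := by
    intro a b c
    simp only [Punf, map_neg, ContinuousLinearMap.neg_apply, LinearMap.neg_apply]
    ring
  have hPneg2 : ∀ a b c, Pc a (-b) c = -Pc a b c := by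
    intro a b c
    simp only [Punf]
    have hfe : (fun y => F y (-b) c) = fun y => -F y b c := funext fun y => by simp
    rw [hfe, fderiv_fun_neg]
    simp only [map_neg, ContinuousLinearMap.neg_apply, LinearMap.neg_apply]
    ring
  have hPneg3 : ∀ a b c, Pc a b (-c) = -Pc a b c := by
    intro a b c
    simp only [Punf]
    have hfe : (fun y => F y b (-c)) = fun y => -F y b c := funext fun y => by simp
    rw [hfe, fderiv_fun_neg]
    simp only [map_neg, ContinuousLinearMap.neg_apply, LinearMap.neg_apply]
    ring
  -- the key invariance transfer: if F is (anti)invariant under L then so is Pc in the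
  -- last two slots
  have key : ∀ (L : E → E →L[ℝ] E) (ε : ℝ),
      (∀ a, DifferentiableAt ℝ (fun y => L y a) x) →
      (∀ a b, fderiv ℝ (fun y => L y b) x a + ΓOb x a (L x b) = L x (ΓOb x a b)) →
      (∀ y ∈ U, ∀ a b, F y (L y a) (L y b) = ε * F y a b) →
      ∀ a b c, Pc a (L x b) (L x c) = ε * Pc a b c := by
    intro L ε hLd' hL hInv a b c
    have hL' : ∀ p q, fderiv ℝ (fun y => L y q) x p = L x (ΓOb x p q) - ΓOb x p (L x q) :=
      fun p q => eq_sub_of_add_eq (hL p q)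
    have heq : (fun y => Fcl F y (L y b) (L y c)) =ᶠ[nhds x] (fun y => ε * F y b c) :=
      Filter.eventuallyEq_of_mem hxU fun y hy => by
        rw [Fcl_apply, hInv y hy]
    have h1 := fderiv_apply2 (Fcl F) hFcd (hLd' b) (hLd' c) a
    have h2 : fderiv ℝ (fun y => Fcl F y (L y b) (L y c)) x a
        = ε * fderiv ℝ (fun y => F y b c) x a := by
      rw [heq.fderiv_eq, fderiv_const_mul (hFd b c)]
      simp
    rw [h2, hL' a b, hL' a c] at h1
    simp only [map_sub, ContinuousLinearMap.sub_apply, Fcl_apply,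
      hInv x hx (ΓOb x a b) c, hInv x hx b (ΓOb x a c)] at h1
    simp only [hconst] at h1
    simp only [Punf, hconst]
    linear_combination -h1
  -- the three type symmetries of Pc in its last two slots
  have PsymI : ∀ a b c, Pc a (I x b) (I x c) = Pc a b c := by
    intro a b c
    have h := key I 1 hId (hOb.parI x hx) (fun y hy p q => by rw [hFI y hy p q, one_mul]) a b c
    simpa using h
  have PsymJ : ∀ a b c, Pc a (J x b) (J x c) = -Pc a b c := by
    intro a b c
    have h := key J (-1) hJd (hOb.parJ x hx) (fun y hy p q => by rw [hFJ y hy p q]; ring) a b c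
    simpa using h
  have PsymK : ∀ a b c, Pc a (K x b) (K x c) = -Pc a b c := by
    intro a b c
    have h := key K (-1) hKd (hOb.parK x hx) (fun y hy p q => by rw [hFK y hy p q]; ring) a b c
    simpa using h
  -- moving a complex structure between the last two slots
  have hmoveJ : ∀ a b c, Pc a (J x b) c = Pc a b (J x c) := by
    intro a b c
    have h := PsymJ a b (-(J x c))
    rw [map_neg, hJJ x hx c, neg_neg, hPneg3] at h
    linarith
  have hmoveK : ∀ a b c, Pc a (K x b) c = Pc a b (K x c) := by
    intro a b c
    have h := PsymK a b (-(K x c))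
    rw [map_neg, hKK x hx c, neg_neg, hPneg3] at h
    linarith
  have hmoveI : ∀ a b c, Pc a (I x b) c = -Pc a b (I x c) := by
    intro a b c
    have h := PsymI a b (-(I x c))
    rw [map_neg, hII x hx c, neg_neg, hPneg3] at h
    linarith
  -- d2 of an antisymmetric form is the cyclic sum of covariant derivatives
  have cyclic : ∀ (H : E → E → E → ℝ), (∀ y ∈ U, ∀ a b, H y a b = -H y b a) →
      ∀ a b c, d2 H x a b c
        = covDer2 ΓOb H x a b c + covDer2 ΓOb H x b c a + covDer2 ΓOb H x c a b := by
    intro H hH a b c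
    have swap : ∀ p q r, fderiv ℝ (fun y => H y q r) x p = -fderiv ℝ (fun y => H y r q) x p := by
      intro p q r
      have he : (fun y => H y q r) =ᶠ[nhds x] (fun y => -H y r q) :=
        Filter.eventuallyEq_of_mem hxU fun y hy => hH y hy q r
      rw [he.fderiv_eq, fderiv_fun_neg, ContinuousLinearMap.neg_apply]
    simp only [d2, covDer2]
    rw [swap b c a, hOb.torsionFree x hx b a, hOb.torsionFree x hx c a,
      hOb.torsionFree x hx c b, hH x hx c (ΓOb x a b), hH x hx (ΓOb x a c) b,
      hH x hx a (ΓOb x b c)]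
    ring
  -- F itself: identity C_J coming from D-closedness in direction J
  have hcombo : ∀ a : E, unitCombo I J K 0 1 0 x a = J x a := by
    intro a; simp [unitCombo]
  have CJ : ∀ a b c, Pc (J x a) b (J x c) + Pc (J x b) c (J x a) + Pc (J x c) a (J x b)
      = d2 (fun y p q => F y p q) x a b c := by
    intro a b c
    have h := hDF x hx 0 1 0 (by norm_num) a b c
    simp only [hcombo] at h
    simp only [cyclic (fun y p q => F y p q) hFanti] at h
    simp only [← hPdef] at h
    simp only [hmoveJ, hJJ x hx, hPneg3] at h
    rw [cyclic (fun y p q => F y p q) hFanti a b c]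
    simp only [← hPdef]
    linarith
  -- conversion lemma
  have hconv : ∀ a b c, Pc (K x a) (I x b) (K x c) = Pc (K x a) (K x b) (I x c) := by
    intro a b c
    rw [hmoveI (K x a) b (K x c), hIK x hx c, hPneg3 (K x a) b (J x c), neg_neg,
      hmoveK (K x a) b (I x c), hKI x hx c]
  -- Statement (1)
  have CJI := CJ (I x u) (I x v) (I x w)
  simp only [hJI x hx, hPneg1, hPneg3, neg_neg] at CJI
  simp only [hconv] at CJI
  -- covDer2 of G
  have hFJswap : ∀ y ∈ U, ∀ a b, F y (J y a) b = F y a (J y b) := by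
    intro y hy a b
    have h := hFJ y hy (J y a) b
    rw [hJJ y hy a, map_neg, LinearMap.neg_apply] at h
    linarith
  have hGanti : ∀ y ∈ U, ∀ a b, G y a b = -G y b a := by
    intro y hy a b
    rw [hG y hy a b, hG y hy b a, hFJswap y hy a b, hFanti y hy a (J y b)]
  have hGP : ∀ a b c, covDer2 ΓOb G x a b c = Pc a (J x b) c := by
    intro a b c
    have he : (fun y => G y b c) =ᶠ[nhds x] (fun y => F y (J y b) c) :=
      Filter.eventuallyEq_of_mem hxU fun y hy => hG y hy b c
    have h1 := fderiv_apply2 (Fcl F) hFcd (hJd b) (differentiableAt_const c) a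
    have hJ' : fderiv ℝ (fun y => J y b) x a = J x (ΓOb x a b) - ΓOb x a (J x b) :=
      eq_sub_of_add_eq (hOb.parJ x hx a b)
    rw [hJ'] at h1
    simp only [fderiv_fun_const, Pi.zero_apply, ContinuousLinearMap.zero_apply, map_zero, add_zero,
      map_sub, ContinuousLinearMap.sub_apply, LinearMap.sub_apply, Fcl_apply, hconst] at h1
    show fderiv ℝ (fun y => G y b c) x a - G x (ΓOb x a b) c - G x b (ΓOb x a c) = _
    rw [he.fderiv_eq, hG x hx (ΓOb x a b) c, hG x hx b (ΓOb x a c)]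
    simp only [Punf, hconst]
    linarith [h1]
  -- Statement (2)
  have h2 := cyclic G hGanti (K x u) (K x v) (K x w)
  simp only [hGP, hJK x hx] at h2
  simp only [hconv] at h2
  refine ⟨CJI.symm, ?_, ?_⟩
  · rw [h2]; exact CJI.symm
  · simp only [act3]
    rw [h2, CJI]


end HKTPaper
end
end
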